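/- Let C = ⟨a, b⟩ be an HFP-code of type Q of length 4n with kernel of dimension 2, where κ = a^ι · b is the nontrivial kernel element with zero first coordinate, and with π_a = (1,2,…,2n)(2n+1,…,4n) and π_b = (1,4n)(2,4n−1)⋯(2n,2n+1). Then κ = (v‖v) with v = (0,1,0,1,…,0,1) when ι is even, and κ = (v‖v+1) when ι is odd (up to complement). -/

import Mathlib

/-- The action of a coordinate permutation `σ` on a binary vector:
`(permAct σ v) i = v (σ⁻¹ i)`. -/
def permAct {m : ℕ} (σ : Equiv.Perm (Fin m)) (v : Fin m → ZMod 2) : Fin m → ZMod 2 :=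
  fun i => v (σ.symm i)

/-- The propelinear operation `x · y = x + π_x(y)`. -/
def pmul {m : ℕ} (π : (Fin m → ZMod 2) → Equiv.Perm (Fin m))
    (x y : Fin m → ZMod 2) : Fin m → ZMod 2 :=
  x + permAct (π x) y

/-- Powers with respect to the propelinear operation. -/
def ppow {m : ℕ} (π : (Fin m → ZMod 2) → Equiv.Perm (Fin m))
    (g : Fin m → ZMod 2) : ℕ → Fin m → ZMod 2
  | 0 => 0
  | k + 1 => pmul π g (ppow π g k)

/-- The all-ones vector. -/
def allOnes (m : ℕ) : Fin m → ZMod 2 := fun _ => 1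


namespace StmtAux
open Finset
variable {m : ℕ}

open Finset

variable {m : ℕ}

lemma permAct_add (σ : Equiv.Perm (Fin m)) (v w : Fin m → ZMod 2) :
    permAct σ (v + w) = permAct σ v + permAct σ w := rfl

lemma permAct_mul (σ τ : Equiv.Perm (Fin m)) (v : Fin m → ZMod 2) :
    permAct (σ * τ) v = permAct σ (permAct τ v) := rfl

lemma permAct_apply_apply (σ : Equiv.Perm (Fin m)) (v : Fin m → ZMod 2) (j) :
    permAct σ v (σ j) = v j := by simp [permAct]

lemma permAct_one (v : Fin m → ZMod 2) : permAct 1 v = v := rfl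

lemma permAct_zero (σ : Equiv.Perm (Fin m)) : permAct σ (0 : Fin m → ZMod 2) = 0 := rfl

lemma permAct_allOnes (σ : Equiv.Perm (Fin m)) : permAct σ (allOnes m) = allOnes m := rfl

lemma addSelf (v : Fin m → ZMod 2) : v + v = 0 := by
  funext i; exact CharTwo.add_self_eq_zero _

lemma pmul_zero_right (π : (Fin m → ZMod 2) → Equiv.Perm (Fin m)) (x : Fin m → ZMod 2) :
    pmul π x 0 = x := by simp [pmul, permAct_zero]

lemma pmul_zero_left (π : (Fin m → ZMod 2) → Equiv.Perm (Fin m)) (h : π 0 = 1)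
    (y : Fin m → ZMod 2) : pmul π 0 y = y := by simp [pmul, h, permAct_one]

lemma pmul_assoc (π : (Fin m → ZMod 2) → Equiv.Perm (Fin m)) {x y : Fin m → ZMod 2}
    (h : π (pmul π x y) = π x * π y) (z : Fin m → ZMod 2) :
    pmul π (pmul π x y) z = pmul π x (pmul π y z) := by
  have : pmul π (pmul π x y) z = pmul π x y + permAct (π x * π y) z := by rw [← h]; rfl
  rw [this]
  simp only [pmul, permAct_mul, permAct_add, add_assoc]



lemma firstHalf (n : ℕ) (hn : 0 < n) (κ : Fin (4*n) → ZMod 2)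
    (πa : Equiv.Perm (Fin (4*n)))
    (hπa : ∀ i : Fin (4*n), ((πa i : ℕ)) =
      if (i : ℕ) < 2*n then ((i : ℕ) + 1) % (2*n) else 2*n + (((i : ℕ) + 1) % (2*n)))
    (hstep : ∀ j, κ (πa j) = κ j + 1)
    (hfirst : κ ⟨0, by omega⟩ = 0) :
    ∀ j : Fin (4*n), (j : ℕ) < 2*n → κ j = (((j : ℕ) : ℕ) : ZMod 2) := by
  have key : ∀ s : ℕ, ∀ h4 : s < 2*n, κ ⟨s, by omega⟩ = ((s : ℕ) : ZMod 2) := by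
    intro s
    induction s with
    | zero => intro h4; simpa using hfirst
    | succ s ih =>
      intro h4
      have hs : s < 2*n := by omega
      have e : πa ⟨s, by omega⟩ = ⟨s+1, by omega⟩ := by
        apply Fin.ext
        rw [hπa]
        simp only [Fin.val_mk]
        rw [if_pos hs]
        exact Nat.mod_eq_of_lt h4
      have h5 := hstep ⟨s, by omega⟩
      rw [e, ih hs] at h5
      rw [h5]
      push_cast
      ring
  intro j hj
  have := key (j : ℕ) hj
  simpa using this

lemma secondHalf (n : ℕ) (hn : 0 < n) (κ : Fin (4*n) → ZMod 2)
    (πa : Equiv.Perm (Fin (4*n)))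
    (hπa : ∀ i : Fin (4*n), ((πa i : ℕ)) =
      if (i : ℕ) < 2*n then ((i : ℕ) + 1) % (2*n) else 2*n + (((i : ℕ) + 1) % (2*n)))
    (hstep : ∀ j, κ (πa j) = κ j + 1) :
    ∀ j : Fin (4*n), 2*n ≤ (j : ℕ) → κ j = κ ⟨2*n, by omega⟩ + ((((j : ℕ) - 2*n : ℕ)) : ZMod 2) := by
  have key : ∀ t : ℕ, ∀ h4 : t < 2*n, κ ⟨2*n + t, by omega⟩ = κ ⟨2*n, by omega⟩ + ((t : ℕ) : ZMod 2) := by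
    intro t
    induction t with
    | zero => intro h4; simp
    | succ t ih =>
      intro h4
      have hs : t < 2*n := by omega
      have e : πa ⟨2*n + t, by omega⟩ = ⟨2*n + (t+1), by omega⟩ := by
        apply Fin.ext
        rw [hπa]
        simp only [Fin.val_mk]
        rw [if_neg (by omega)]
        congr 1
        rw [show 2*n + t + 1 = 2*n + (t+1) by omega, Nat.add_mod_left]
        exact Nat.mod_eq_of_lt h4
      have h5 := hstep ⟨2*n + t, by omega⟩
      rw [e, ih hs] at h5
      rw [h5]
      push_cast
      ring
  intro j hj
  have h4 : (j : ℕ) - 2*n < 2*n := by omega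
  have := key ((j : ℕ) - 2*n) h4
  have e : (⟨2*n + ((j : ℕ) - 2*n), by omega⟩ : Fin (4*n)) = j := by
    apply Fin.ext; simp only [Fin.val_mk]; omega
  rwa [e] at this

lemma finalForm (n ι : ℕ) (hn : 0 < n) (κ : Fin (4*n) → ZMod 2)
    (h1 : ∀ j : Fin (4*n), (j : ℕ) < 2*n → κ j = (((j : ℕ) : ℕ) : ZMod 2))
    (h2 : ∀ j : Fin (4*n), 2*n ≤ (j : ℕ) → κ j = κ ⟨2*n, by omega⟩ + ((((j : ℕ) - 2*n : ℕ)) : ZMod 2))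
    (h3 : κ ⟨2*n, by omega⟩ = (ι : ZMod 2)) :
    (ι % 2 = 0 → κ = fun i : Fin (4*n) => (((i : ℕ) % 2 : ℕ) : ZMod 2)) ∧
    (ι % 2 = 1 → κ = fun i : Fin (4*n) => if (i : ℕ) < 2*n
      then (((i : ℕ) % 2 : ℕ) : ZMod 2) else (((i : ℕ) % 2 : ℕ) : ZMod 2) + 1) := by
  have hcast : ∀ x : ℕ, ((x : ℕ) : ZMod 2) = ((x % 2 : ℕ) : ZMod 2) :=
    fun x => (ZMod.natCast_mod x 2).symm
  constructor
  · intro hpar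
    funext i
    rcases Nat.lt_or_ge (i : ℕ) (2*n) with h|h
    · rw [h1 i h]; exact hcast _
    · rw [h2 i h, h3, hcast ι, hpar, Nat.cast_zero, zero_add, hcast ((i:ℕ) - 2*n),
        show ((i:ℕ) - 2*n) % 2 = (i:ℕ) % 2 by omega]
  · intro hpar
    funext i
    rcases Nat.lt_or_ge (i : ℕ) (2*n) with h|h
    · rw [h1 i h]
      simp only [if_pos h]
      exact hcast _
    · rw [h2 i h, h3, hcast ι, hpar]
      simp only [if_neg (by omega : ¬ (i:ℕ) < 2*n)]
      rw [hcast ((i:ℕ) - 2*n), show ((i:ℕ) - 2*n) % 2 = (i:ℕ) % 2 by omega]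
      push_cast
      ring


open Finset

lemma zmodCases (x : ZMod 2) : x = 0 ∨ x = 1 := by revert x; decide

lemma card_half1 (n : ℕ) :
    (Finset.univ.filter (fun j : Fin (4*n) => (j:ℕ) < 2*n)).card = 2*n := by
  have e : (Finset.univ.filter (fun j : Fin (4*n) => (j:ℕ) < 2*n)) =
      Finset.map (Fin.castLEEmb (show 2*n ≤ 4*n by omega)) Finset.univ := by
    ext j
    rw [Finset.mem_map, Finset.mem_filter]
    constructor
    · rintro ⟨-, hj⟩; exact ⟨⟨(j:ℕ), hj⟩, Finset.mem_univ _, Fin.ext rfl⟩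
    · rintro ⟨i, -, rfl⟩; exact ⟨Finset.mem_univ _, i.isLt⟩
  rw [e, Finset.card_map, Finset.card_univ, Fintype.card_fin]

lemma card_half2 (n : ℕ) :
    (Finset.univ.filter (fun j : Fin (4*n) => ¬ (j:ℕ) < 2*n)).card = 2*n := by
  have h := Finset.card_filter_add_card_filter_not
    (s := (Finset.univ : Finset (Fin (4*n)))) (p := fun j : Fin (4*n) => (j:ℕ) < 2*n)
  rw [Finset.card_univ, Fintype.card_fin, card_half1 n] at h
  omega

lemma split_card (n : ℕ) (p : Fin (4*n) → Prop) [DecidablePred p] :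
    (Finset.univ.filter p).card
      = ((Finset.univ.filter (fun j : Fin (4*n) => (j:ℕ) < 2*n)).filter p).card
        + ((Finset.univ.filter (fun j : Fin (4*n) => ¬ (j:ℕ) < 2*n)).filter p).card := by
  have h := Finset.card_filter_add_card_filter_not
    (s := Finset.univ.filter p) (p := fun j : Fin (4*n) => (j:ℕ) < 2*n)
  have e1 : (Finset.univ.filter p).filter (fun j : Fin (4*n) => (j:ℕ) < 2*n)
      = (Finset.univ.filter (fun j : Fin (4*n) => (j:ℕ) < 2*n)).filter p := by
    rw [Finset.filter_comm]
  have e2 : (Finset.univ.filter p).filter (fun j : Fin (4*n) => ¬ (j:ℕ) < 2*n)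
      = (Finset.univ.filter (fun j : Fin (4*n) => ¬ (j:ℕ) < 2*n)).filter p := by
    rw [Finset.filter_comm]
  rw [e1, e2] at h
  omega

lemma badCount (n : ℕ) (κ v : Fin (4*n) → ZMod 2)
    (hκform : ∀ j : Fin (4*n), κ j = if (j:ℕ) < 2*n then 0 else 1)
    (hv0 : hammingDist v 0 = 2*n)
    (hκv : hammingDist κ v = 2*n) :
    ((Finset.univ.filter (fun j : Fin (4*n) => (j:ℕ) < 2*n)).filter
      (fun j => v j = 1)).card = n := by
  have h1 : (Finset.univ.filter (fun j : Fin (4*n) => v j ≠ 0)).card = 2*n := by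
    rw [← hv0]; rfl
  have h2 : (Finset.univ.filter (fun j : Fin (4*n) => κ j ≠ v j)).card = 2*n := by
    rw [← hκv]; rfl
  have e1 : Finset.univ.filter (fun j : Fin (4*n) => v j ≠ 0)
      = Finset.univ.filter (fun j : Fin (4*n) => v j = 1) := by
    apply Finset.filter_congr
    intro x _
    rcases zmodCases (v x) with h|h <;> simp [h]
  rw [e1, split_card n (fun j => v j = 1)] at h1
  rw [split_card n (fun j => κ j ≠ v j)] at h2
  have e2 : (Finset.univ.filter (fun j : Fin (4*n) => (j:ℕ) < 2*n)).filter
        (fun j => κ j ≠ v j)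
      = (Finset.univ.filter (fun j : Fin (4*n) => (j:ℕ) < 2*n)).filter
        (fun j => v j = 1) := by
    apply Finset.filter_congr
    intro x hx
    have hxlt := (Finset.mem_filter.mp hx).2
    rw [hκform x, if_pos hxlt]
    rcases zmodCases (v x) with h|h <;> simp [h]
  have e3 : (Finset.univ.filter (fun j : Fin (4*n) => ¬ (j:ℕ) < 2*n)).filter
        (fun j => κ j ≠ v j)
      = (Finset.univ.filter (fun j : Fin (4*n) => ¬ (j:ℕ) < 2*n)).filter
        (fun j => ¬ v j = 1) := by
    apply Finset.filter_congr
    intro x hx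
    have hxlt := (Finset.mem_filter.mp hx).2
    rw [hκform x, if_neg hxlt]
    rcases zmodCases (v x) with h|h <;> simp [h]
  rw [e2, e3] at h2
  have h3 := Finset.card_filter_add_card_filter_not
    (s := Finset.univ.filter (fun j : Fin (4*n) => ¬ (j:ℕ) < 2*n))
    (p := fun j => v j = 1)
  rw [card_half2 n] at h3
  omega

lemma sum_half_eq (n : ℕ) (v : Fin (4*n) → ZMod 2) :
    (∑ j ∈ (Finset.univ.filter (fun j : Fin (4*n) => (j:ℕ) < 2*n)), v j)
      = ((((Finset.univ.filter (fun j : Fin (4*n) => (j:ℕ) < 2*n)).filter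
          (fun j => v j = 1)).card : ℕ) : ZMod 2) := by
  rw [← Finset.sum_filter_add_sum_filter_not
    (Finset.univ.filter (fun j : Fin (4*n) => (j:ℕ) < 2*n)) (fun j => v j = 1)]
  have h2 : ∑ j ∈ (Finset.univ.filter (fun j : Fin (4*n) => (j:ℕ) < 2*n)).filter
      (fun j => ¬ v j = 1), v j = 0 := by
    apply Finset.sum_eq_zero
    intro j hj
    have h := (Finset.mem_filter.mp hj).2
    rcases zmodCases (v j) with h'|h'
    · exact h'
    · exact absurd h' h
  have h1 : ∑ j ∈ (Finset.univ.filter (fun j : Fin (4*n) => (j:ℕ) < 2*n)).filter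
      (fun j => v j = 1), v j
      = ((Finset.univ.filter (fun j : Fin (4*n) => (j:ℕ) < 2*n)).filter
          (fun j => v j = 1)).card • (1 : ZMod 2) := by
    rw [← Finset.sum_const]
    exact Finset.sum_congr rfl (fun j hj => (Finset.mem_filter.mp hj).2)
  rw [h1, h2, add_zero, nsmul_eq_mul, mul_one]

lemma sum_half_perm (n : ℕ) (σ : Equiv.Perm (Fin (4*n)))
    (hσ : ∀ j : Fin (4*n), ((σ j : ℕ) < 2*n ↔ (j:ℕ) < 2*n)) (v : Fin (4*n) → ZMod 2) :
    (∑ j ∈ Finset.univ.filter (fun j : Fin (4*n) => (j:ℕ) < 2*n), v (σ.symm j))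
      = ∑ j ∈ Finset.univ.filter (fun j : Fin (4*n) => (j:ℕ) < 2*n), v j := by
  have hσ' : ∀ j : Fin (4*n), ((σ.symm j : ℕ) < 2*n ↔ (j:ℕ) < 2*n) := by
    intro j
    have h := hσ (σ.symm j)
    rw [Equiv.apply_symm_apply] at h
    exact h.symm
  apply Finset.sum_nbij' (i := fun j => σ.symm j) (j := fun j => σ j)
  · intro j hj
    simp only [Finset.mem_filter, Finset.mem_univ, true_and] at hj ⊢
    exact (hσ' j).mpr hj
  · intro j hj
    simp only [Finset.mem_filter, Finset.mem_univ, true_and] at hj ⊢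
    exact (hσ j).mpr hj
  · intro j _; exact Equiv.apply_symm_apply σ j
  · intro j _; exact Equiv.symm_apply_apply σ j
  · intro j _; rfl


open Finset

lemma zmodCases' (x : ZMod 2) : x = 0 ∨ x = 1 := by revert x; decide

lemma badForm (n : ℕ) (hn : 0 < n) (κ : Fin (4*n) → ZMod 2)
    (πa : Equiv.Perm (Fin (4*n)))
    (hπa : ∀ i : Fin (4*n), ((πa i : ℕ)) =
      if (i : ℕ) < 2*n then ((i : ℕ) + 1) % (2*n) else 2*n + (((i : ℕ) + 1) % (2*n)))
    (hstep : ∀ j, κ (πa j) = κ j)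
    (hfirst : κ ⟨0, by omega⟩ = 0) (hκ0 : κ ≠ 0) :
    ∀ j : Fin (4*n), κ j = if (j:ℕ) < 2*n then 0 else 1 := by
  have key1 : ∀ s : ℕ, ∀ h4 : s < 2*n, κ ⟨s, by omega⟩ = 0 := by
    intro s
    induction s with
    | zero => intro h4; exact hfirst
    | succ s ih =>
      intro h4
      have hs : s < 2*n := by omega
      have e : πa ⟨s, by omega⟩ = ⟨s+1, by omega⟩ := by
        apply Fin.ext
        rw [hπa]
        simp only [Fin.val_mk]
        rw [if_pos hs]
        exact Nat.mod_eq_of_lt h4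
      have h5 := hstep ⟨s, by omega⟩
      rw [e, ih hs] at h5
      exact h5
  have key2 : ∀ t : ℕ, ∀ h4 : t < 2*n, κ ⟨2*n + t, by omega⟩ = κ ⟨2*n, by omega⟩ := by
    intro t
    induction t with
    | zero => intro h4; rfl
    | succ t ih =>
      intro h4
      have hs : t < 2*n := by omega
      have e : πa ⟨2*n + t, by omega⟩ = ⟨2*n + (t+1), by omega⟩ := by
        apply Fin.ext
        rw [hπa]
        simp only [Fin.val_mk]
        rw [if_neg (by omega)]
        congr 1
        rw [show 2*n + t + 1 = 2*n + (t+1) by omega, Nat.add_mod_left]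
        exact Nat.mod_eq_of_lt h4
      have h5 := hstep ⟨2*n + t, by omega⟩
      rw [e, ih hs] at h5
      exact h5
  have key3 : κ ⟨2*n, by omega⟩ = 1 := by
    rcases zmodCases' (κ ⟨2*n, by omega⟩) with h|h
    · exfalso
      apply hκ0
      funext j
      rcases Nat.lt_or_ge (j : ℕ) (2*n) with hj|hj
      · have := key1 (j:ℕ) hj
        rwa [show (⟨(j:ℕ), by omega⟩ : Fin (4*n)) = j from Fin.ext rfl] at this
      · have h4 : (j:ℕ) - 2*n < 2*n := by omega
        have := key2 ((j:ℕ) - 2*n) h4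
        rw [show (⟨2*n + ((j:ℕ) - 2*n), by omega⟩ : Fin (4*n)) = j from
          Fin.ext (by simp only [Fin.val_mk]; omega), h] at this
        exact this
    · exact h
  intro j
  rcases Nat.lt_or_ge (j : ℕ) (2*n) with hj|hj
  · rw [if_pos hj]
    have := key1 (j:ℕ) hj
    rwa [show (⟨(j:ℕ), by omega⟩ : Fin (4*n)) = j from Fin.ext rfl] at this
  · rw [if_neg (by omega)]
    have h4 : (j:ℕ) - 2*n < 2*n := by omega
    have := key2 ((j:ℕ) - 2*n) h4
    rw [show (⟨2*n + ((j:ℕ) - 2*n), by omega⟩ : Fin (4*n)) = j from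
      Fin.ext (by simp only [Fin.val_mk]; omega), key3] at this
    exact this

lemma nOne (n : ℕ) (hn1 : n = 1) (C : Finset (Fin (4*n) → ZMod 2)) (κ : Fin (4*n) → ZMod 2)
    (h0 : (0 : Fin (4*n) → ZMod 2) ∈ C) (hcard : C.card = 8*n)
    (hdist : ∀ x ∈ C, ∀ y ∈ C, x ≠ y → x ≠ y + allOnes (4*n) → hammingDist x y = 2*n)
    (hκform : ∀ j : Fin (4*n), κ j = if (j:ℕ) < 2*n then 0 else 1)
    (hker : ∀ z : Fin (4*n) → ZMod 2, C.image (fun v => v + z) = C ↔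
      (z = 0 ∨ z = allOnes (4*n) ∨ z = κ ∨ z = κ + allOnes (4*n))) : False := by
  classical
  subst hn1
  have hCE : C ⊆ Finset.univ.filter (fun v : Fin (4*1) → ZMod 2 => ∑ j, v j = 0) := by
    intro x hx
    rw [Finset.mem_filter]
    refine ⟨Finset.mem_univ _, ?_⟩
    by_cases hx0 : x = 0
    · subst hx0; simp
    by_cases hxu : x = allOnes (4*1)
    · subst hxu; decide
    · have hwt := hdist x hx 0 h0 hx0 (by rwa [zero_add])
      have key : ∀ v : Fin (4*1) → ZMod 2, hammingDist v 0 = 2*1 → (∑ j, v j) = 0 := by decide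
      exact key x hwt
  have hEcard : (Finset.univ.filter (fun v : Fin (4*1) → ZMod 2 => ∑ j, v j = 0)).card = 8 := by
    decide
  have hCeq : C = Finset.univ.filter (fun v : Fin (4*1) → ZMod 2 => ∑ j, v j = 0) :=
    Finset.eq_of_subset_of_card_le hCE (by rw [hEcard, hcard])
  have hzimg : C.image (fun v => v + (fun j : Fin (4*1) => ((j:ℕ) : ZMod 2))) = C := by
    apply Finset.eq_of_subset_of_card_le
    · intro y hy
      rw [Finset.mem_image] at hy
      obtain ⟨x, hx, rfl⟩ := hy
      rw [hCeq] at hx ⊢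
      rw [Finset.mem_filter] at hx ⊢
      refine ⟨Finset.mem_univ _, ?_⟩
      have hzs : (∑ j : Fin (4*1), ((j:ℕ) : ZMod 2)) = 0 := by decide
      have e : (∑ j, (x + (fun j : Fin (4*1) => ((j:ℕ) : ZMod 2))) j)
          = (∑ j, x j) + ∑ j : Fin (4*1), ((j:ℕ) : ZMod 2) := by
        rw [← Finset.sum_add_distrib]; rfl
      rw [e, hx.2, hzs, add_zero]
    · rw [Finset.card_image_of_injective _ (add_left_injective _)]
  rcases (hker (fun j : Fin (4*1) => ((j:ℕ) : ZMod 2))).mp hzimg with h|h|h|h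
  · have h2 := congrFun h (⟨1, by decide⟩ : Fin (4*1))
    simp at h2
  · have h2 := congrFun h (⟨0, by decide⟩ : Fin (4*1))
    simp [allOnes] at h2
  · have h2 := congrFun h (⟨1, by decide⟩ : Fin (4*1))
    rw [hκform] at h2
    simp at h2
  · have h2 := congrFun h (⟨0, by decide⟩ : Fin (4*1))
    rw [show (κ + allOnes (4*1)) (⟨0, by decide⟩ : Fin (4*1))
      = κ (⟨0, by decide⟩ : Fin (4*1)) + 1 from rfl, hκform] at h2
    simp at h2


open Finset

lemma powZeroVal (n : ℕ) (hn : 0 < n) (a : Fin (4*n) → ZMod 2)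
    (A : ℕ → Fin (4*n) → ZMod 2) (πa : Equiv.Perm (Fin (4*n)))
    (hA0 : A 0 = 0)
    (hAs : ∀ k, A (k+1) = A k + permAct (πa^k) a)
    (hpow : ∀ (k s : ℕ) (hs : s < 2*n), (((πa^k) (⟨s, by omega⟩ : Fin (4*n))) : ℕ)
      = (s+k) % (2*n)) :
    A (2*n) ⟨0, by omega⟩
      = ∑ j ∈ Finset.univ.filter (fun j : Fin (4*n) => (j:ℕ) < 2*n), a j := by
  have h2npos : 0 < 2*n := by omega
  have hml : ∀ x : ℕ, x % (2*n) < 4*n :=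
    fun x => lt_of_lt_of_le (Nat.mod_lt x h2npos) (by omega)
  have hg0 : (2*n - 0) % (2*n) = 0 := by rw [Nat.sub_zero, Nat.mod_self]
  have hgval : ∀ j : ℕ, 0 < j → j < 2*n → (2*n - j) % (2*n) = 2*n - j :=
    fun j h1 h2 => Nat.mod_eq_of_lt (by omega)
  have step1 : ∀ k, A k ⟨0, by omega⟩
      = ∑ j ∈ Finset.range k, a ((πa^j).symm ⟨0, by omega⟩) := by
    intro k
    induction k with
    | zero => rw [hA0, Finset.sum_range_zero]; rfl
    | succ k ih =>
      rw [hAs k, Finset.sum_range_succ, ← ih]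
      rfl
  have step2 : ∀ j : ℕ, j < 2*n → (πa^j).symm ⟨0, by omega⟩
      = ⟨(2*n - j) % (2*n), hml _⟩ := by
    intro j hj
    rw [Equiv.symm_apply_eq]
    apply Fin.ext
    rw [hpow j ((2*n - j) % (2*n)) (Nat.mod_lt _ h2npos)]
    rcases Nat.eq_zero_or_pos j with h|h
    · subst h
      rw [hg0]
      simp
    · rw [hgval j h hj, show 2*n - j + j = 2*n by omega, Nat.mod_self]
  have step3 : ∑ j ∈ Finset.range (2*n), a ⟨(2*n - j) % (2*n), hml _⟩
      = ∑ x ∈ Finset.univ.filter (fun x : Fin (4*n) => (x:ℕ) < 2*n), a x := by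
    apply Finset.sum_nbij' (i := fun j => (⟨(2*n - j) % (2*n), hml _⟩ : Fin (4*n)))
      (j := fun x : Fin (4*n) => (2*n - (x:ℕ)) % (2*n))
    · intro j hj
      simp only [Finset.mem_filter, Finset.mem_univ, true_and, Fin.val_mk]
      exact Nat.mod_lt _ h2npos
    · intro x hx
      rw [Finset.mem_range]
      exact Nat.mod_lt _ h2npos
    · intro j hj
      rw [Finset.mem_range] at hj
      simp only [Fin.val_mk]
      rcases Nat.eq_zero_or_pos j with h|h
      · subst h; rw [hg0, hg0]
      · rw [hgval j h hj, show 2*n - (2*n - j) = j by omega, Nat.mod_eq_of_lt hj]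
    · intro x hx
      rw [Finset.mem_filter] at hx
      have hxv := hx.2
      apply Fin.ext
      simp only [Fin.val_mk]
      rcases Nat.eq_zero_or_pos (x:ℕ) with h|h
      · rw [h, hg0, hg0]
      · rw [hgval ((x:ℕ)) h hxv, show 2*n - (2*n - (x:ℕ)) = (x:ℕ) by omega,
          Nat.mod_eq_of_lt hxv]
    · intro j _; rfl
  rw [step1 (2*n), ← step3]
  apply Finset.sum_congr rfl
  intro j hj
  rw [Finset.mem_range] at hj
  rw [step2 j hj]


end StmtAux


set_option maxHeartbeats 1600000 in
/-- Let `C = ⟨a, b⟩` be an HFP-code of type Q of length `4n` with kernel of dimension 2,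
`K(C) = {0, u, κ, κ+u}` with `κ = a^ι · b` having zero first coordinate, and with
`π_a = (1,…,2n)(2n+1,…,4n)`, `π_b = (1,4n)(2,4n−1)⋯(2n,2n+1)`. Then `κ = (v‖v)` with
`v = (0,1,0,1,…,0,1)` when `ι` is even, and `κ = (v‖v+1)` when `ι` is odd. -/


theorem stmt_19 (n : ℕ) (hn : 0 < n) (C : Finset (Fin (4*n) → ZMod 2))
    (π : (Fin (4*n) → ZMod 2) → Equiv.Perm (Fin (4*n)))
    (h0 : (0 : Fin (4*n) → ZMod 2) ∈ C) (hu : allOnes (4*n) ∈ C)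
    (hcard : C.card = 8*n)
    (hclosed : ∀ x ∈ C, ∀ y ∈ C, pmul π x y ∈ C)
    (hhom : ∀ x ∈ C, ∀ y ∈ C, π (pmul π x y) = π x * π y)
    (hπ0 : π 0 = 1) (hπu : π (allOnes (4*n)) = 1)
    (hfree : ∀ x ∈ C, x ≠ 0 → x ≠ allOnes (4*n) → ∀ i, π x i ≠ i)
    (hdist : ∀ x ∈ C, ∀ y ∈ C, x ≠ y → x ≠ y + allOnes (4*n) → hammingDist x y = 2*n)
    (a b : Fin (4*n) → ZMod 2) (ha : a ∈ C) (hb : b ∈ C)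
    (haord : ∀ m : ℕ, 0 < m → m < 4*n → ppow π a m ≠ 0)
    (ha4n : ppow π a (4*n) = 0)
    (ha2n : ppow π a (2*n) = allOnes (4*n))
    (hb2 : pmul π b b = allOnes (4*n))
    (hrel : pmul π a b = pmul π b (ppow π a (4*n - 1)))
    (hgen : ∀ x ∈ C, ∃ i j : ℕ, x = pmul π (ppow π a i) (ppow π b j))
    (hπa : ∀ i : Fin (4*n), ((π a i : ℕ)) =
      if (i : ℕ) < 2*n then ((i : ℕ) + 1) % (2*n) else 2*n + (((i : ℕ) + 1) % (2*n)))
    (hπb : ∀ i : Fin (4*n), ((π b i : ℕ)) = 4*n - 1 - (i : ℕ))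
    (ι : ℕ) (κ : Fin (4*n) → ZMod 2)
    (hκ : κ = pmul π (ppow π a ι) b)
    (hκ0 : κ ≠ 0) (hκu : κ ≠ allOnes (4*n))
    (hκfirst : κ ⟨0, by omega⟩ = 0)
    (hker : ∀ z : Fin (4*n) → ZMod 2, C.image (fun v => v + z) = C ↔
      (z = 0 ∨ z = allOnes (4*n) ∨ z = κ ∨ z = κ + allOnes (4*n))) :
    (ι % 2 = 0 → κ = fun i : Fin (4*n) => (((i : ℕ) % 2 : ℕ) : ZMod 2)) ∧
    (ι % 2 = 1 → κ = fun i : Fin (4*n) => if (i : ℕ) < 2*n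
      then (((i : ℕ) % 2 : ℕ) : ZMod 2) else (((i : ℕ) % 2 : ℕ) : ZMod 2) + 1) := by
  classical
  set d := 4*n - 1 with hd
  -- ## Stage 1 : group facts
  have hAmem : ∀ i, ppow π a i ∈ C := by
    intro i; induction i with
    | zero => exact h0
    | succ k ih => exact hclosed a ha _ ih
  have hA1 : ppow π a 1 = a := by
    show pmul π a (ppow π a 0) = a
    exact StmtAux.pmul_zero_right π a
  have hπA : ∀ i, π (ppow π a i) = (π a) ^ i := by
    intro i; induction i with
    | zero => show π 0 = (π a)^0; simpa using hπ0
    | succ k ih =>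
      have h := hhom a ha _ (hAmem k)
      rw [show ppow π a (k+1) = pmul π a (ppow π a k) from rfl, h, ih, pow_succ']
  have hassoc : ∀ x ∈ C, ∀ y ∈ C, ∀ z, pmul π (pmul π x y) z = pmul π x (pmul π y z) :=
    fun x hx y hy z => StmtAux.pmul_assoc π (hhom x hx y hy) z
  have hpow_add : ∀ i j, ppow π a (i + j) = pmul π (ppow π a i) (ppow π a j) := by
    intro i j; induction i with
    | zero =>
      rw [Nat.zero_add]
      exact (StmtAux.pmul_zero_left π hπ0 _).symm
    | succ k ih =>
      have e : k + 1 + j = (k + j) + 1 := by omega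
      rw [e, show ppow π a ((k+j)+1) = pmul π a (ppow π a (k+j)) from rfl, ih,
        ← hassoc a ha _ (hAmem k)]
      rfl
  have hmul_a : ∀ i, pmul π (ppow π a i) a = ppow π a (i+1) := by
    intro i
    have h := hpow_add i 1
    rw [hA1] at h
    exact h.symm
  have hA0 : ∀ k, ppow π a (4*n*k) = 0 := by
    intro k; induction k with
    | zero => rfl
    | succ k ih =>
      have e : 4*n*(k+1) = 4*n + 4*n*k := by ring
      rw [e, hpow_add, ha4n, StmtAux.pmul_zero_left π hπ0, ih]
  have hd1 : d + 1 = 4*n := by omega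
  have hba : pmul π b a = pmul π (ppow π a d) b := by
    have h1 : pmul π (ppow π a d) (pmul π a b) = b := by
      rw [← hassoc _ (hAmem d) a ha, hmul_a, hd1, ha4n, StmtAux.pmul_zero_left π hπ0]
    rw [hrel] at h1
    have h2 : pmul π (pmul π (ppow π a d) b) (ppow π a d) = b := by
      rw [hassoc _ (hAmem d) b hb]; exact h1
    calc pmul π b a
        = pmul π (pmul π (pmul π (ppow π a d) b) (ppow π a d)) a := by rw [h2]
      _ = pmul π (pmul π (ppow π a d) b) (pmul π (ppow π a d) a) := by
          rw [hassoc _ (hclosed _ (hAmem d) b hb) _ (hAmem d)]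
      _ = pmul π (ppow π a d) b := by
          rw [hmul_a, hd1, ha4n, StmtAux.pmul_zero_right]
  have hbA : ∀ i, pmul π b (ppow π a i) = pmul π (ppow π a (i*d)) b := by
    intro i; induction i with
    | zero =>
      rw [Nat.zero_mul]
      show pmul π b 0 = pmul π 0 b
      rw [StmtAux.pmul_zero_right, StmtAux.pmul_zero_left π hπ0]
    | succ k ih =>
      calc pmul π b (ppow π a (k+1))
          = pmul π b (pmul π a (ppow π a k)) := rfl
        _ = pmul π (pmul π b a) (ppow π a k) := (hassoc b hb a ha _).symm
        _ = pmul π (pmul π (ppow π a d) b) (ppow π a k) := by rw [hba]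
        _ = pmul π (ppow π a d) (pmul π b (ppow π a k)) := hassoc _ (hAmem d) b hb _
        _ = pmul π (ppow π a d) (pmul π (ppow π a (k*d)) b) := by rw [ih]
        _ = pmul π (pmul π (ppow π a d) (ppow π a (k*d))) b :=
            (hassoc _ (hAmem d) _ (hAmem _) b).symm
        _ = pmul π (ppow π a ((k+1)*d)) b := by
            rw [← hpow_add, show d + k*d = (k+1)*d by ring]
  have hκmem : κ ∈ C := by rw [hκ]; exact hclosed _ (hAmem ι) b hb
  have hκκ : pmul π κ κ = allOnes (4*n) := by
    rw [hκ]
    calc pmul π (pmul π (ppow π a ι) b) (pmul π (ppow π a ι) b)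
        = pmul π (ppow π a ι) (pmul π b (pmul π (ppow π a ι) b)) :=
          hassoc _ (hAmem ι) b hb _
      _ = pmul π (ppow π a ι) (pmul π (pmul π b (ppow π a ι)) b) := by
          rw [hassoc b hb _ (hAmem ι)]
      _ = pmul π (ppow π a ι) (pmul π (pmul π (ppow π a (ι*d)) b) b) := by rw [hbA]
      _ = pmul π (ppow π a ι) (pmul π (ppow π a (ι*d)) (pmul π b b)) := by
          rw [hassoc _ (hAmem _) b hb]
      _ = pmul π (pmul π (ppow π a ι) (ppow π a (ι*d))) (pmul π b b) :=
          (hassoc _ (hAmem ι) _ (hAmem _) _).symm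
      _ = allOnes (4*n) := by
          rw [← hpow_add, show ι + ι*d = 4*n*ι by
            rw [show ι + ι*d = ι*(d+1) by ring, hd1, Nat.mul_comm], hA0, hb2,
            StmtAux.pmul_zero_left π hπ0]
  have hπκ : π κ = (π a)^ι * π b := by rw [hκ, hhom _ (hAmem ι) b hb, hπA]
  have hπκκ : permAct (π κ) κ = κ + allOnes (4*n) := by
    have h := hκκ
    rw [show pmul π κ κ = κ + permAct (π κ) κ from rfl] at h
    calc permAct (π κ) κ = κ + (κ + permAct (π κ) κ) := by
          rw [← add_assoc, StmtAux.addSelf, zero_add]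
      _ = κ + allOnes (4*n) := by rw [h]
  -- ## Stage 2 : permutation facts
  have h2npos : 0 < 2*n := by omega
  have h2n1 : 1 < 2*n := by omega
  have hmlt : ∀ x : ℕ, x % (2*n) < 4*n :=
    fun x => lt_of_lt_of_le (Nat.mod_lt x h2npos) (by omega)
  have hmlt2 : ∀ x : ℕ, 2*n + x % (2*n) < 4*n :=
    fun x => by have := Nat.mod_lt x h2npos; omega
  have hπa_fst : ∀ (s : ℕ) (hs : s < 2*n),
      π a ⟨s, by omega⟩ = ⟨(s+1) % (2*n), hmlt _⟩ := by
    intro s hs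
    apply Fin.ext
    rw [hπa]
    simp [hs]
  have hπa_snd : ∀ (t : ℕ) (ht : t < 2*n),
      π a ⟨2*n + t, by omega⟩ = ⟨2*n + (t+1) % (2*n), hmlt2 _⟩ := by
    intro t ht
    apply Fin.ext
    rw [hπa]
    simp only [Fin.val_mk]
    rw [if_neg (by omega)]
    congr 1
    rw [show 2*n + t + 1 = 2*n + (t+1) by omega, Nat.add_mod_left]
  have hpow_fst : ∀ (k s : ℕ) (hs : s < 2*n),
      ((π a)^k) ⟨s, by omega⟩ = ⟨(s+k) % (2*n), hmlt _⟩ := by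
    intro k
    induction k with
    | zero => intro s hs; apply Fin.ext; simp [Nat.mod_eq_of_lt hs]
    | succ k ih =>
      intro s hs
      rw [pow_succ, Equiv.Perm.mul_apply, hπa_fst s hs, ih _ (Nat.mod_lt _ h2npos)]
      apply Fin.ext
      simp only [Fin.val_mk]
      have h1 := (Nat.mod_modEq (s+1) (2*n)).add_right k
      rw [show s+(k+1) = (s+1)+k by omega]
      exact h1
  have hpow_snd : ∀ (k t : ℕ) (ht : t < 2*n),
      ((π a)^k) ⟨2*n + t, by omega⟩ = ⟨2*n + (t+k) % (2*n), hmlt2 _⟩ := by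
    intro k
    induction k with
    | zero => intro t ht; apply Fin.ext; simp [Nat.mod_eq_of_lt ht]
    | succ k ih =>
      intro t ht
      rw [pow_succ, Equiv.Perm.mul_apply, hπa_snd t ht, ih _ (Nat.mod_lt _ h2npos)]
      apply Fin.ext
      simp only [Fin.val_mk]
      congr 1
      have h1 := (Nat.mod_modEq (t+1) (2*n)).add_right k
      rw [show t+(k+1) = (t+1)+k by omega]
      exact h1
  have hπb0 : π b ⟨0, by omega⟩ = ⟨2*n + (2*n-1), by omega⟩ := by
    apply Fin.ext
    rw [hπb]
    simp only [Fin.val_mk]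
    omega
  have hπκ0 : π κ ⟨0, by omega⟩ = ⟨2*n + ((2*n-1) + ι) % (2*n), hmlt2 _⟩ := by
    rw [hπκ, Equiv.Perm.mul_apply, hπb0, hpow_snd ι (2*n-1) (by omega)]
  have hAκ : ∀ i, ppow π a i ≠ κ := by
    intro i he
    have hp : (π a)^i = π κ := by rw [← hπA, he]
    have h1 := congrArg (fun σ : Equiv.Perm (Fin (4*n)) =>
      ((σ ⟨0, by omega⟩ : Fin (4*n)) : ℕ)) hp
    rw [hpow_fst i 0 h2npos, hπκ0] at h1
    simp only [Fin.val_mk] at h1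
    have h2 := Nat.mod_lt (0+i) h2npos
    omega
  have hκu_eq : κ + allOnes (4*n) = pmul π (allOnes (4*n)) κ := by
    rw [show pmul π (allOnes (4*n)) κ
        = allOnes (4*n) + permAct (π (allOnes (4*n))) κ from rfl, hπu,
      StmtAux.permAct_one, add_comm]
  have hπκu : π (κ + allOnes (4*n)) = π κ := by
    rw [hκu_eq, hhom _ hu κ hκmem, hπu, one_mul]
  have hκumem : κ + allOnes (4*n) ∈ C := by
    rw [hκu_eq]; exact hclosed _ hu κ hκmem
  have hAκu : ∀ i, ppow π a i ≠ κ + allOnes (4*n) := by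
    intro i he
    have hp : (π a)^i = π κ := by rw [← hπA, he, hπκu]
    have h1 := congrArg (fun σ : Equiv.Perm (Fin (4*n)) =>
      ((σ ⟨0, by omega⟩ : Fin (4*n)) : ℕ)) hp
    rw [hpow_fst i 0 h2npos, hπκ0] at h1
    simp only [Fin.val_mk] at h1
    have h2 := Nat.mod_lt (0+i) h2npos
    omega
  have hAu_eq : ∀ i, ppow π a i + allOnes (4*n) = pmul π (ppow π a i) (allOnes (4*n)) := by
    intro i
    rw [show pmul π (ppow π a i) (allOnes (4*n))
        = ppow π a i + permAct (π (ppow π a i)) (allOnes (4*n)) from rfl,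
      StmtAux.permAct_allOnes]
  have hπAu : ∀ i, π (ppow π a i + allOnes (4*n)) = (π a)^i := by
    intro i
    rw [hAu_eq, hhom _ (hAmem i) _ hu, hπu, mul_one, hπA]
  have hκAu : ∀ i, κ ≠ ppow π a i + allOnes (4*n) := by
    intro i he
    have hp : (π a)^i = π κ := by rw [← hπAu i, ← he]
    have h1 := congrArg (fun σ : Equiv.Perm (Fin (4*n)) =>
      ((σ ⟨0, by omega⟩ : Fin (4*n)) : ℕ)) hp
    rw [hpow_fst i 0 h2npos, hπκ0] at h1
    simp only [Fin.val_mk] at h1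
    have h2 := Nat.mod_lt (0+i) h2npos
    omega
  have hpane1 : ∀ i : ℕ, 0 < i → i < 4*n → i ≠ 2*n → (π a)^i ≠ 1 := by
    intro i h1 h2 h3 he
    have h4 := congrArg (fun σ : Equiv.Perm (Fin (4*n)) =>
      ((σ ⟨0, by omega⟩ : Fin (4*n)) : ℕ)) he
    rw [hpow_fst i 0 h2npos] at h4
    simp only [Fin.val_mk, Equiv.Perm.coe_one, id_eq] at h4
    -- h4 : (0+i) % (2*n) = 0
    rcases Nat.lt_or_ge i (2*n) with h5|h5
    · rw [Nat.zero_add, Nat.mod_eq_of_lt h5] at h4; omega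
    · have e : (0+i) % (2*n) = (i - 2*n) % (2*n) := by
        rw [Nat.zero_add]
        conv_lhs => rw [show i = 2*n + (i - 2*n) by omega]
        rw [Nat.add_mod_left]
      rw [e, Nat.mod_eq_of_lt (by omega)] at h4
      omega
  have hAne0 : ∀ i : ℕ, 0 < i → i < 4*n → i ≠ 2*n → ppow π a i ≠ 0 := by
    intro i h1 h2 h3 he
    exact hpane1 i h1 h2 h3 (by rw [← hπA, he, hπ0])
  have hAneu : ∀ i : ℕ, 0 < i → i < 4*n → i ≠ 2*n → ppow π a i ≠ allOnes (4*n) := by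
    intro i h1 h2 h3 he
    exact hpane1 i h1 h2 h3 (by rw [← hπA, he, hπu])
  -- ## Stage 3 : kernel invariance
  have hKC : ∀ x ∈ C, x + κ ∈ C := by
    intro x hx
    have h4 := (hker κ).mpr (Or.inr (Or.inr (Or.inl rfl)))
    rw [← h4]
    exact Finset.mem_image_of_mem _ hx
  have hainv : ∀ y, pmul π a (pmul π (ppow π a d) y) = y := by
    intro y
    rw [← hassoc a ha _ (hAmem d)]
    have e : pmul π a (ppow π a d) = 0 := by
      have e1 : ppow π a (d+1) = 0 := by rw [hd1, ha4n]
      exact e1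
    rw [e, StmtAux.pmul_zero_left π hπ0]
  have himg : C.image (fun v => v + permAct (π a) κ) = C := by
    apply Finset.eq_of_subset_of_card_le
    · intro y hy
      rw [Finset.mem_image] at hy
      obtain ⟨x, hx, rfl⟩ := hy
      have hz : pmul π (ppow π a d) x ∈ C := hclosed _ (hAmem d) x hx
      have hzκ : pmul π (ppow π a d) x + κ ∈ C := hKC _ hz
      have h5 := hclosed a ha _ hzκ
      have e : pmul π a (pmul π (ppow π a d) x + κ) = x + permAct (π a) κ := by
        rw [show pmul π a (pmul π (ppow π a d) x + κ)
            = a + permAct (π a) (pmul π (ppow π a d) x + κ) from rfl,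
          StmtAux.permAct_add, ← add_assoc,
          show a + permAct (π a) (pmul π (ppow π a d) x)
            = pmul π a (pmul π (ppow π a d) x) from rfl,
          hainv x]
      rwa [e] at h5
    · rw [Finset.card_image_of_injective _ (add_left_injective _)]
  have hmain := (hker _).mp himg
  have hne0 : permAct (π a) κ ≠ 0 := by
    intro he
    apply hκ0
    funext j
    have h6 := congrFun he (π a j)
    rw [StmtAux.permAct_apply_apply] at h6
    exact h6
  have hneu : permAct (π a) κ ≠ allOnes (4*n) := by
    intro he
    apply hκu
    funext j
    have h6 := congrFun he (π a j)
    rw [StmtAux.permAct_apply_apply] at h6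
    exact h6
  rcases hmain with he|he|he|he
  · exact absurd he hne0
  · exact absurd he hneu
  · -- BAD case : permAct (π a) κ = κ  → contradiction
    exfalso
    have hstep0 : ∀ j, κ (π a j) = κ j := by
      intro j
      have h6 := congrFun he (π a j)
      rw [StmtAux.permAct_apply_apply] at h6
      exact h6.symm
    have hκform := StmtAux.badForm n hn κ (π a) hπa hstep0 hκfirst hκ0
    by_cases hn1 : n = 1
    · exact StmtAux.nOne n hn1 C κ h0 hcard hdist hκform hker
    · have hπaIff : ∀ j : Fin (4*n), ((π a j : ℕ) < 2*n ↔ (j:ℕ) < 2*n) := by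
        intro j
        by_cases hj : (j:ℕ) < 2*n
        · rw [hπa j, if_pos hj]
          exact iff_of_true (Nat.mod_lt _ h2npos) hj
        · rw [hπa j, if_neg hj]
          exact iff_of_false (by omega) hj
      have hpowval : ∀ (k s : ℕ) (hs : s < 2*n),
          ((((π a)^k) (⟨s, by omega⟩ : Fin (4*n))) : ℕ) = (s+k) % (2*n) := by
        intro k s hs
        rw [hpow_fst k s hs]
      have hAs : ∀ k, ppow π a (k+1) = ppow π a k + permAct ((π a)^k) a := by
        intro k
        rw [← hmul_a k, ← hπA k]
        rfl
      have hSa1 : ∑ j ∈ Finset.univ.filter (fun j : Fin (4*n) => (j:ℕ) < 2*n), a j = 1 := by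
        have h7 := StmtAux.powZeroVal n hn a (ppow π a) (π a) rfl hAs hpowval
        rw [ha2n] at h7
        exact h7.symm
      have hd10 : hammingDist (ppow π a 1) 0 = 2*n :=
        hdist _ (hAmem 1) 0 h0 (hAne0 1 (by omega) (by omega) (by omega))
          (by rw [zero_add]; exact hAneu 1 (by omega) (by omega) (by omega))
      have hd1κ : hammingDist κ (ppow π a 1) = 2*n :=
        hdist κ hκmem _ (hAmem 1) (fun h => hAκ 1 h.symm) (hκAu 1)
      have hd20 : hammingDist (ppow π a 2) 0 = 2*n :=
        hdist _ (hAmem 2) 0 h0 (hAne0 2 (by omega) (by omega) (by omega))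
          (by rw [zero_add]; exact hAneu 2 (by omega) (by omega) (by omega))
      have hd2κ : hammingDist κ (ppow π a 2) = 2*n :=
        hdist κ hκmem _ (hAmem 2) (fun h => hAκ 2 h.symm) (hκAu 2)
      have hW1 := StmtAux.badCount n κ (ppow π a 1) hκform hd10 hd1κ
      have hW2 := StmtAux.badCount n κ (ppow π a 2) hκform hd20 hd2κ
      have hS1 := StmtAux.sum_half_eq n (ppow π a 1)
      have hS2 := StmtAux.sum_half_eq n (ppow π a 2)
      rw [hW1] at hS1
      rw [hW2] at hS2
      rw [hA1, hSa1] at hS1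
      have hA2e : ppow π a 2 = a + permAct (π a) a := by
        have h8 := hAs 1
        rw [hA1, pow_one] at h8
        exact h8
      have hsum2 : ∑ j ∈ Finset.univ.filter (fun j : Fin (4*n) => (j:ℕ) < 2*n),
          (ppow π a 2) j = 0 := by
        rw [hA2e]
        have e0 : ∑ j ∈ Finset.univ.filter (fun j : Fin (4*n) => (j:ℕ) < 2*n),
            (a + permAct (π a) a) j
            = ∑ j ∈ Finset.univ.filter (fun j : Fin (4*n) => (j:ℕ) < 2*n),
              (a j + permAct (π a) a j) := rfl
        rw [e0, Finset.sum_add_distrib]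
        have e1 : ∑ j ∈ Finset.univ.filter (fun j : Fin (4*n) => (j:ℕ) < 2*n),
            permAct (π a) a j
            = ∑ j ∈ Finset.univ.filter (fun j : Fin (4*n) => (j:ℕ) < 2*n),
              a ((π a).symm j) := rfl
        rw [e1, StmtAux.sum_half_perm n (π a) hπaIff a, hSa1]
        decide
      rw [hsum2] at hS2
      have hfin : (1 : ZMod 2) = 0 := hS1.trans hS2.symm
      exact absurd hfin (by decide)
  · -- GOOD case : permAct (π a) κ = κ + u
    have hstep1 : ∀ j, κ (π a j) = κ j + 1 := by
      intro j
      have h6 := congrFun he (π a j)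
      rw [StmtAux.permAct_apply_apply] at h6
      have e : (κ + allOnes (4*n)) (π a j) = κ (π a j) + 1 := rfl
      rw [e] at h6
      rw [h6, add_assoc, show (1:ZMod 2) + 1 = 0 by decide, add_zero]
    have hκstep : ∀ j, κ (π κ j) = κ j + 1 := by
      intro j
      have h6 := congrFun hπκκ (π κ j)
      rw [StmtAux.permAct_apply_apply] at h6
      have e : (κ + allOnes (4*n)) (π κ j) = κ (π κ j) + 1 := rfl
      rw [e] at h6
      rw [h6, add_assoc, show (1:ZMod 2) + 1 = 0 by decide, add_zero]
    have h1 := StmtAux.firstHalf n hn κ (π a) hπa hstep1 hκfirst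
    have h2 := StmtAux.secondHalf n hn κ (π a) hπa hstep1
    have hκ2n : κ ⟨2*n, by omega⟩ = ((ι:ℕ) : ZMod 2) := by
      have h6 := hκstep ⟨0, by omega⟩
      rw [hπκ0, hκfirst, zero_add] at h6
      have h7 := h2 ⟨2*n + ((2*n-1) + ι) % (2*n), hmlt2 _⟩ (by simp only [Fin.val_mk]; omega)
      rw [h7] at h6
      simp only [Fin.val_mk] at h6
      rw [show 2*n + ((2*n-1) + ι) % (2*n) - 2*n = ((2*n-1) + ι) % (2*n) by omega] at h6
      have hcast : ((((2*n-1) + ι) % (2*n) : ℕ) : ZMod 2) = 1 + ((ι:ℕ) : ZMod 2) := by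
        have e1 : ((2*n-1) + ι) % (2*n) % 2 = (1 + ι) % 2 := by
          rw [Nat.mod_mod_of_dvd _ ⟨n, rfl⟩]
          omega
        rw [← ZMod.natCast_mod (((2*n-1) + ι) % (2*n)) 2, e1, ZMod.natCast_mod]
        push_cast
        ring
      rw [hcast] at h6
      have hsolve : ∀ x y : ZMod 2, x + (1 + y) = 1 → x = y := by decide
      exact hsolve _ _ h6
    exact StmtAux.finalForm n ι hn κ h1 h2 hκ2n
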